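/- Let C₁ ≥ 0, C₂ ≥ 0, and γ̂ ≥ 0. The function g(u, v) = log₂(1 + (C₁ + C₂/u)·γ̂/v) is jointly convex on the set {(u, v) ∈ ℝ² : u > 0, v > 0}; that is, for all (u₁, v₁), (u₂, v₂) with u₁, u₂, v₁, v₂ > 0 and all t ∈ [0,1], g(t·u₁ + (1−t)·u₂, t·v₁ + (1−t)·v₂) ≤ t·g(u₁, v₁) + (1−t)·g(u₂, v₂). -/

import Mathlib

/-- Two-point Hölder inequality for sums of three nonnegative terms. -/
lemma hoelder3 (t : ℝ) (ht : 0 < t) (ht1 : t < 1)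
    (x₁ x₂ x₃ y₁ y₂ y₃ : ℝ) (hx₁ : 0 ≤ x₁) (hx₂ : 0 ≤ x₂) (hx₃ : 0 ≤ x₃)
    (hy₁ : 0 ≤ y₁) (hy₂ : 0 ≤ y₂) (hy₃ : 0 ≤ y₃)
    (hS₁ : 0 < x₁ + x₂ + x₃) (hS₂ : 0 < y₁ + y₂ + y₃) :
    x₁ ^ t * y₁ ^ (1 - t) + x₂ ^ t * y₂ ^ (1 - t) + x₃ ^ t * y₃ ^ (1 - t)
      ≤ (x₁ + x₂ + x₃) ^ t * (y₁ + y₂ + y₃) ^ (1 - t) := by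
  set S₁ := x₁ + x₂ + x₃ with hS₁def
  set S₂ := y₁ + y₂ + y₃ with hS₂def
  have hP₁ : (0:ℝ) < S₁ ^ t := Real.rpow_pos_of_pos hS₁ t
  have hP₂ : (0:ℝ) < S₂ ^ (1 - t) := Real.rpow_pos_of_pos hS₂ (1 - t)
  have key : ∀ x y : ℝ, 0 ≤ x → 0 ≤ y →
      x ^ t * y ^ (1 - t) ≤ (t * (x / S₁) + (1 - t) * (y / S₂)) * (S₁ ^ t * S₂ ^ (1 - t)) := by
    intro x y hx hy
    have h1 : x ^ t * y ^ (1 - t)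
        = (x / S₁) ^ t * (y / S₂) ^ (1 - t) * (S₁ ^ t * S₂ ^ (1 - t)) := by
      rw [Real.div_rpow hx hS₁.le, Real.div_rpow hy hS₂.le]
      field_simp
    rw [h1]
    have hgm := Real.geom_mean_le_arith_mean2_weighted (w₁ := t) (w₂ := 1 - t)
      (p₁ := x / S₁) (p₂ := y / S₂) ht.le (by linarith)
      (div_nonneg hx hS₁.le) (div_nonneg hy hS₂.le) (by ring)
    exact mul_le_mul_of_nonneg_right hgm (by positivity)
  have h1 := key x₁ y₁ hx₁ hy₁
  have h2 := key x₂ y₂ hx₂ hy₂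
  have h3 := key x₃ y₃ hx₃ hy₃
  have hsum : (t * (x₁ / S₁) + (1 - t) * (y₁ / S₂)) * (S₁ ^ t * S₂ ^ (1 - t))
      + (t * (x₂ / S₁) + (1 - t) * (y₂ / S₂)) * (S₁ ^ t * S₂ ^ (1 - t))
      + (t * (x₃ / S₁) + (1 - t) * (y₃ / S₂)) * (S₁ ^ t * S₂ ^ (1 - t))
      = S₁ ^ t * S₂ ^ (1 - t) := by
    have e1 : x₁ / S₁ + x₂ / S₁ + x₃ / S₁ = 1 := by
      field_simp
      exact hS₁def.symm
    have e2 : y₁ / S₂ + y₂ / S₂ + y₃ / S₂ = 1 := by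
      field_simp
      exact hS₂def.symm
    have expand : (t * (x₁ / S₁) + (1 - t) * (y₁ / S₂)) * (S₁ ^ t * S₂ ^ (1 - t))
        + (t * (x₂ / S₁) + (1 - t) * (y₂ / S₂)) * (S₁ ^ t * S₂ ^ (1 - t))
        + (t * (x₃ / S₁) + (1 - t) * (y₃ / S₂)) * (S₁ ^ t * S₂ ^ (1 - t))
        = (t * (x₁ / S₁ + x₂ / S₁ + x₃ / S₁) + (1 - t) * (y₁ / S₂ + y₂ / S₂ + y₃ / S₂))
          * (S₁ ^ t * S₂ ^ (1 - t)) := by ring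
    rw [expand, e1, e2]
    ring
  linarith

lemma div_gm_le (t : ℝ) (ht : 0 < t) (ht1 : t < 1) (a v₁ v₂ : ℝ)
    (ha : 0 ≤ a) (hv₁ : 0 < v₁) (hv₂ : 0 < v₂) (M : ℝ) (hM : v₁ ^ t * v₂ ^ (1 - t) ≤ M) :
    a / M ≤ (a / v₁) ^ t * (a / v₂) ^ (1 - t) := by
  have hG : (0:ℝ) < v₁ ^ t * v₂ ^ (1 - t) := by positivity
  have hrw : (a / v₁) ^ t * (a / v₂) ^ (1 - t) = a / (v₁ ^ t * v₂ ^ (1 - t)) := by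
    rw [Real.div_rpow ha hv₁.le, Real.div_rpow ha hv₂.le]
    rw [div_mul_div_comm, ← Real.rpow_add' ha (by norm_num)]
    norm_num
  rw [hrw]
  exact div_le_div_of_nonneg_left ha hG hM

/-- Weighted AM–GM gives `a / (t*v₁+(1-t)*v₂) ≤ (a/v₁)^t * (a/v₂)^(1-t)`. -/
lemma div_comb_le (t : ℝ) (ht : 0 < t) (ht1 : t < 1) (a v₁ v₂ : ℝ)
    (ha : 0 ≤ a) (hv₁ : 0 < v₁) (hv₂ : 0 < v₂) :
    a / (t * v₁ + (1 - t) * v₂) ≤ (a / v₁) ^ t * (a / v₂) ^ (1 - t) :=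
  div_gm_le t ht ht1 a v₁ v₂ ha hv₁ hv₂ _
    (Real.geom_mean_le_arith_mean2_weighted (w₁ := t) (w₂ := 1 - t)
      (p₁ := v₁) (p₂ := v₂) ht.le (by linarith) hv₁.le hv₂.le (by ring))

/-- Joint convexity on the positive quadrant of
`g(u, v) = log₂(1 + (C₁ + C₂/u) · γ̂ / v)` for nonnegative constants. -/
theorem stmt_8 (C₁ C₂ γ' : ℝ) (hC₁ : 0 ≤ C₁) (hC₂ : 0 ≤ C₂) (hγ : 0 ≤ γ')
    (u₁ v₁ u₂ v₂ : ℝ) (hu₁ : 0 < u₁) (hv₁ : 0 < v₁) (hu₂ : 0 < u₂) (hv₂ : 0 < v₂)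
    (t : ℝ) (ht0 : 0 ≤ t) (ht1 : t ≤ 1) :
    Real.logb 2 (1 + (C₁ + C₂ / (t * u₁ + (1 - t) * u₂)) * γ' / (t * v₁ + (1 - t) * v₂))
    ≤ t * Real.logb 2 (1 + (C₁ + C₂ / u₁) * γ' / v₁)
      + (1 - t) * Real.logb 2 (1 + (C₁ + C₂ / u₂) * γ' / v₂) := by
  rcases eq_or_lt_of_le ht0 with h0 | h0
  · simp [← h0]
  rcases eq_or_lt_of_le ht1 with h1 | h1
  · simp [h1]
  set a := C₁ * γ' with hadef
  set b := C₂ * γ' with hbdef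
  have ha : 0 ≤ a := mul_nonneg hC₁ hγ
  have hb : 0 ≤ b := mul_nonneg hC₂ hγ
  have hub : 0 < t * u₁ + (1 - t) * u₂ := by nlinarith
  have hvb : 0 < t * v₁ + (1 - t) * v₂ := by nlinarith
  -- rewrite the three arguments
  have hform : ∀ u v : ℝ, 0 < u → 0 < v →
      1 + (C₁ + C₂ / u) * γ' / v = 1 + a / v + b / (u * v) := by
    intro u v hu hv
    field_simp
    ring
  rw [hform _ _ hub hvb, hform _ _ hu₁ hv₁, hform _ _ hu₂ hv₂]
  set F₁ := 1 + a / v₁ + b / (u₁ * v₁) with hF₁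
  set F₂ := 1 + a / v₂ + b / (u₂ * v₂) with hF₂
  have hF₁pos : 0 < F₁ := by
    have : 0 ≤ a / v₁ := div_nonneg ha hv₁.le
    have : 0 ≤ b / (u₁ * v₁) := div_nonneg hb (by positivity)
    rw [hF₁]; positivity
  have hF₂pos : 0 < F₂ := by
    have : 0 ≤ a / v₂ := div_nonneg ha hv₂.le
    have : 0 ≤ b / (u₂ * v₂) := div_nonneg hb (by positivity)
    rw [hF₂]; positivity
  have hLpos : 0 < 1 + a / (t * v₁ + (1 - t) * v₂)
      + b / ((t * u₁ + (1 - t) * u₂) * (t * v₁ + (1 - t) * v₂)) := by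
    have h1 : 0 ≤ a / (t * v₁ + (1 - t) * v₂) := div_nonneg ha hvb.le
    have h2 : 0 ≤ b / ((t * u₁ + (1 - t) * u₂) * (t * v₁ + (1 - t) * v₂)) :=
      div_nonneg hb (by positivity)
    linarith
  -- key inequality: value at convex combination ≤ weighted geometric mean
  have hkey : 1 + a / (t * v₁ + (1 - t) * v₂)
      + b / ((t * u₁ + (1 - t) * u₂) * (t * v₁ + (1 - t) * v₂))
      ≤ F₁ ^ t * F₂ ^ (1 - t) := by
    have t1 : (1:ℝ) = (1:ℝ) ^ t * (1:ℝ) ^ (1 - t) := by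
      rw [Real.one_rpow, Real.one_rpow]; norm_num
    have t2 : a / (t * v₁ + (1 - t) * v₂) ≤ (a / v₁) ^ t * (a / v₂) ^ (1 - t) :=
      div_comb_le t h0 h1 a v₁ v₂ ha hv₁ hv₂
    have t3 : b / ((t * u₁ + (1 - t) * u₂) * (t * v₁ + (1 - t) * v₂))
        ≤ (b / (u₁ * v₁)) ^ t * (b / (u₂ * v₂)) ^ (1 - t) := by
      have hgmu : u₁ ^ t * u₂ ^ (1 - t) ≤ t * u₁ + (1 - t) * u₂ :=
        Real.geom_mean_le_arith_mean2_weighted (w₁ := t) (w₂ := 1 - t)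
          (p₁ := u₁) (p₂ := u₂) h0.le (by linarith) hu₁.le hu₂.le (by ring)
      have hgmv : v₁ ^ t * v₂ ^ (1 - t) ≤ t * v₁ + (1 - t) * v₂ :=
        Real.geom_mean_le_arith_mean2_weighted (w₁ := t) (w₂ := 1 - t)
          (p₁ := v₁) (p₂ := v₂) h0.le (by linarith) hv₁.le hv₂.le (by ring)
      have hGM : (u₁ * v₁) ^ t * (u₂ * v₂) ^ (1 - t)
          ≤ (t * u₁ + (1 - t) * u₂) * (t * v₁ + (1 - t) * v₂) := by
        rw [Real.mul_rpow hu₁.le hv₁.le, Real.mul_rpow hu₂.le hv₂.le]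
        have h' : u₁ ^ t * v₁ ^ t * (u₂ ^ (1 - t) * v₂ ^ (1 - t))
            = (u₁ ^ t * u₂ ^ (1 - t)) * (v₁ ^ t * v₂ ^ (1 - t)) := by ring
        rw [h']
        exact mul_le_mul hgmu hgmv (by positivity) hub.le
      exact div_gm_le t h0 h1 b (u₁ * v₁) (u₂ * v₂) hb (by positivity) (by positivity) _ hGM
    have hH := hoelder3 t h0 h1 1 (a / v₁) (b / (u₁ * v₁)) 1 (a / v₂) (b / (u₂ * v₂))
      zero_le_one (div_nonneg ha hv₁.le) (div_nonneg hb (by positivity))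
      zero_le_one (div_nonneg ha hv₂.le) (div_nonneg hb (by positivity))
      (by rw [hF₁] at hF₁pos; linarith) (by rw [hF₂] at hF₂pos; linarith)
    calc 1 + a / (t * v₁ + (1 - t) * v₂)
        + b / ((t * u₁ + (1 - t) * u₂) * (t * v₁ + (1 - t) * v₂))
        ≤ (1:ℝ) ^ t * (1:ℝ) ^ (1 - t) + (a / v₁) ^ t * (a / v₂) ^ (1 - t)
          + (b / (u₁ * v₁)) ^ t * (b / (u₂ * v₂)) ^ (1 - t) := by
          rw [Real.one_rpow, Real.one_rpow, one_mul]; linarith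
      _ ≤ (1 + a / v₁ + b / (u₁ * v₁)) ^ t * (1 + a / v₂ + b / (u₂ * v₂)) ^ (1 - t) := hH
      _ = F₁ ^ t * F₂ ^ (1 - t) := by rw [hF₁, hF₂]
  calc Real.logb 2 (1 + a / (t * v₁ + (1 - t) * v₂)
        + b / ((t * u₁ + (1 - t) * u₂) * (t * v₁ + (1 - t) * v₂)))
      ≤ Real.logb 2 (F₁ ^ t * F₂ ^ (1 - t)) :=
        Real.logb_le_logb_of_le (by norm_num) hLpos hkey
    _ = t * Real.logb 2 F₁ + (1 - t) * Real.logb 2 F₂ := by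
        rw [Real.logb_mul (by positivity) (by positivity)]
        unfold Real.logb
        rw [Real.log_rpow hF₁pos, Real.log_rpow hF₂pos]
        ring
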